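/- arXiv:1503.03670 — 2 statements merged into one kernel-verified Lean document; each statement's English description precedes it below -/
import Mathlib

section
/- Let a²,b²,c² > 0. The minimum set of the bulk potential f_bulk over S₀ is exactly the set S₊ = { s₊(n⊗n − (1/3)I₃) : n ∈ 𝕊² } of uniaxial tensors with order parameter s₊; that is, for every Q ∈ S₀ and every unit vector n ∈ ℝ³ one has f_bulk(Q) ≥ f_bulk(s₊(n⊗n − (1/3)I₃)), with equality if and only if Q = s₊(m⊗m − (1/3)I₃) for some unit vector m ∈ ℝ³. -/
open Real Matrix

noncomputable section

abbrev Mat3 := Matrix (Fin 3) (Fin 3) ℝ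

/-- `Q` is a symmetric traceless 3×3 real matrix, i.e. an element of `S₀`. -/
def isS0 (Q : Mat3) : Prop := Qᵀ = Q ∧ Q.trace = 0

/-- The Landau-de Gennes bulk potential. -/
def fbulk (a2 b2 c2 : ℝ) (Q : Mat3) : ℝ :=
  -(a2/2) * (Q*Q).trace - (b2/3) * (Q*Q*Q).trace + (c2/4) * ((Q*Q).trace)^2

/-- The constant `s₊ = (b² + √(b⁴ + 24a²c²))/(4c²)`. -/
def splus (a2 b2 c2 : ℝ) : ℝ := (b2 + Real.sqrt (b2^2 + 24*a2*c2)) / (4*c2)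

/-! ### Auxiliary scalar lemmas -/

lemma L1 (x y z : ℝ) (h : x + y + z = 0) :
    6 * (x^3+y^3+z^3)^2 ≤ (x^2+y^2+z^2)^3 := by
  have hz : z = -x-y := by linarith
  subst hz
  nlinarith [sq_nonneg ((x-y)*(x+2*y)*(2*x+y))]

lemma Lroot (s x y z : ℝ) (h1 : x + y + z = 0) (h2 : x^2+y^2+z^2 = 2*s^2/3)
    (h3 : x^3+y^3+z^3 = 2*s^3/9) : x = 2*s/3 ∨ x = -s/3 := by
  have he2 : x*y + y*z + z*x = -s^2/3 := by
    linear_combination ((x+y+z)/2) * h1 - h2/2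
  have he3 : x*y*z = 2*s^3/27 := by
    linear_combination h3/3 - ((x^2+y^2+z^2-x*y-y*z-z*x)/3)*h1
  have key : (x - 2*s/3) * (x + s/3)^2 = 0 := by
    linear_combination x^2*h1 - x*he2 + he3
  rcases mul_eq_zero.mp key with h | h
  · left; linarith
  · right; have := pow_eq_zero_iff (n := 2) (by norm_num) |>.mp h; linarith

lemma Lphi (a2 b2 c2 t s : ℝ) (ha : 0 < a2) (hb : 0 < b2) (hc : 0 < c2)
    (ht : 2*c2*t^2 = b2*t + 3*a2) (htpos : 0 < t) (hs : 0 ≤ s) :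
    -a2*t^2/3 - 2*b2*t^3/27 + c2*t^4/9 ≤ -a2*s^2/3 - 2*b2*s^3/27 + c2*s^4/9 ∧
    ((-a2*s^2/3 - 2*b2*s^3/27 + c2*s^4/9 = -a2*t^2/3 - 2*b2*t^3/27 + c2*t^4/9) → s = t) := by
  have hct : c2 * t > b2 / 2 := by nlinarith
  have hG : c2*(s+t)^2 - b2/3*(2*s+t) > 0 := by
    nlinarith [mul_pos hc (mul_pos htpos htpos), sq_nonneg s]
  have hfac : (-a2*s^2/3 - 2*b2*s^3/27 + c2*s^4/9) - (-a2*t^2/3 - 2*b2*t^3/27 + c2*t^4/9)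
      = (s-t)^2 * (c2*(s+t)^2 - b2/3*(2*s+t)) / 9 := by
    field_simp
    nlinarith [ht]
  constructor
  · nlinarith [sq_nonneg (s-t), hG, hfac]
  · intro heq
    by_contra hne
    have hst : s - t ≠ 0 := sub_ne_zero.mpr hne
    have h2 : (s-t)^2 > 0 := by positivity
    nlinarith [mul_pos h2 hG, hfac]

lemma splus_facts (a2 b2 c2 : ℝ) (ha : 0 < a2) (hb : 0 < b2) (hc : 0 < c2) :
    0 < splus a2 b2 c2 ∧
    2*c2*(splus a2 b2 c2)^2 = b2*(splus a2 b2 c2) + 3*a2 := by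
  rw [splus]
  have hr0 : 0 ≤ b2^2 + 24*a2*c2 := by positivity
  have hr : Real.sqrt (b2^2 + 24*a2*c2) ^ 2 = b2^2 + 24*a2*c2 := Real.sq_sqrt hr0
  have hrpos : 0 < Real.sqrt (b2^2 + 24*a2*c2) := Real.sqrt_pos.mpr (by positivity)
  constructor
  · positivity
  · field_simp
    rw [show c2*24*a2 = 24*a2*c2 by ring]
    nlinarith [hr]

lemma scalar_main (a2 b2 c2 t x y z : ℝ) (ha : 0 < a2) (hb : 0 < b2) (hc : 0 < c2)
    (ht : 2*c2*t^2 = b2*t + 3*a2) (htpos : 0 < t) (hsum : x + y + z = 0) :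
    -a2*t^2/3 - 2*b2*t^3/27 + c2*t^4/9
      ≤ -(a2/2)*(x^2+y^2+z^2) - (b2/3)*(x^3+y^3+z^3) + (c2/4)*(x^2+y^2+z^2)^2 ∧
    ((-(a2/2)*(x^2+y^2+z^2) - (b2/3)*(x^3+y^3+z^3) + (c2/4)*(x^2+y^2+z^2)^2
        = -a2*t^2/3 - 2*b2*t^3/27 + c2*t^4/9) →
      (x^2+y^2+z^2 = 2*t^2/3 ∧ x^3+y^3+z^3 = 2*t^3/9)) := by
  obtain ⟨p, hp⟩ : ∃ p, p = x^2+y^2+z^2 := ⟨_, rfl⟩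
  obtain ⟨q, hq⟩ : ∃ q, q = x^3+y^3+z^3 := ⟨_, rfl⟩
  rw [← hp, ← hq]
  have hp0 : 0 ≤ p := by rw [hp]; positivity
  obtain ⟨s, hs0, hs2⟩ : ∃ s, 0 ≤ s ∧ s^2 = 3*p/2 :=
    ⟨Real.sqrt (3*p/2), Real.sqrt_nonneg _, Real.sq_sqrt (by positivity)⟩
  have hps : p = 2*s^2/3 := by linarith [hs2]
  have h6 : 6*q^2 ≤ p^3 := by rw [hp, hq]; exact L1 x y z hsum
  have hq2 : q^2 ≤ (2*s^3/9)^2 := by rw [hps] at h6; nlinarith [h6]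
  have hqle : q ≤ 2*s^3/9 := by
    have habs : |q| ≤ |2*s^3/9| := by
      rw [← Real.sqrt_sq_eq_abs, ← Real.sqrt_sq_eq_abs]
      exact Real.sqrt_le_sqrt hq2
    have h9 : (0:ℝ) ≤ 2*s^3/9 := by positivity
    rw [abs_of_nonneg h9] at habs
    linarith [le_abs_self q]
  have hphi := Lphi a2 b2 c2 t s ha hb hc ht htpos hs0
  have hFs : -(a2/2)*p - (b2/3)*q + (c2/4)*p^2
      = (-a2*s^2/3 - 2*b2*s^3/27 + c2*s^4/9) + (b2/3)*(2*s^3/9 - q) := by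
    rw [hps]; ring
  have hdge : 0 ≤ 2*s^3/9 - q := by linarith
  have hbd : 0 ≤ (b2/3)*(2*s^3/9 - q) := by positivity
  constructor
  · linarith [hphi.1, hFs, hbd]
  · intro heq
    have hdelta : (b2/3)*(2*s^3/9 - q) ≤ 0 := by linarith [hphi.1]
    have hdle : 2*s^3/9 - q ≤ 0 := by nlinarith [hb]
    have hq_eq : q = 2*s^3/9 := by linarith
    have hs_eq : s = t := by
      apply hphi.2
      linarith [hFs, heq, hq_eq]
    refine ⟨by rw [hps, hs_eq], by rw [hq_eq, hs_eq]⟩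

/-! ### Auxiliary matrix lemmas -/

lemma vmv_mul_vmv (a b c d : Fin 3 → ℝ) :
    vecMulVec a b * vecMulVec c d = (b ⬝ᵥ c) • vecMulVec a d := by
  ext i j
  simp only [mul_apply, vecMulVec_apply, dotProduct, Matrix.smul_apply, smul_eq_mul, Finset.sum_mul]
  exact Finset.sum_congr rfl fun k _ => by ring

lemma trace_vmv (a b : Fin 3 → ℝ) : (vecMulVec a b).trace = a ⬝ᵥ b := by
  simp [trace, vecMulVec_apply, dotProduct, diag]

lemma spectral3 (Q : Mat3) (hQ : Qᵀ = Q) :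
    ∃ (l : Fin 3 → ℝ) (u : Fin 3 → Fin 3 → ℝ),
      (∀ i j, u i ⬝ᵥ u j = if i = j then 1 else 0) ∧
      Q = ∑ i, l i • vecMulVec (u i) (u i) ∧
      (1 : Mat3) = ∑ i, vecMulVec (u i) (u i) := by
  have hH : Q.IsHermitian := by
    rw [Matrix.IsHermitian, conjTranspose_eq_transpose_of_trivial, hQ]
  set U : Mat3 := (hH.eigenvectorUnitary : Mat3) with hUdef
  have h2 : U * star U = 1 := (Matrix.mem_unitaryGroup_iff).mp hH.eigenvectorUnitary.2
  have h1 : star U * U = 1 := (Matrix.mem_unitaryGroup_iff').mp hH.eigenvectorUnitary.2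
  refine ⟨hH.eigenvalues, fun i j => U j i, ?_, ?_, ?_⟩
  · intro i j
    have := congrFun (congrFun h1 i) j
    simp only [mul_apply, star_apply, star_trivial] at this
    simp only [dotProduct]
    rw [this, one_apply]
  · have hs : ∀ j k, Q j k = ∑ i, hH.eigenvalues i * (U j i * U k i) := by
      intro j k
      have := congrFun (congrFun hH.spectral_theorem j) k
      rw [this]
      simp only [Unitary.conjStarAlgAut_apply, mul_apply, diagonal_apply, Function.comp_apply, star_apply, star_trivial,
        RCLike.ofReal_real_eq_id, id_eq]
      refine Finset.sum_congr rfl fun m _ => ?_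
      simp only [mul_ite, mul_zero, Finset.sum_ite_eq' Finset.univ m, Finset.mem_univ, if_true]
      ring
    ext j k
    rw [hs j k]
    simp only [Matrix.sum_apply, Matrix.smul_apply, vecMulVec_apply, smul_eq_mul]
  · ext j k
    have := congrFun (congrFun h2 j) k
    simp only [mul_apply, star_apply, star_trivial] at this
    rw [← this]
    simp only [Matrix.sum_apply, vecMulVec_apply]

lemma dec_mul (f g : Fin 3 → ℝ) (u : Fin 3 → Fin 3 → ℝ)
    (orth : ∀ i j, u i ⬝ᵥ u j = if i = j then 1 else 0) :
    (∑ i, f i • vecMulVec (u i) (u i)) * (∑ j, g j • vecMulVec (u j) (u j))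
      = ∑ i, (f i * g i) • vecMulVec (u i) (u i) := by
  rw [Finset.sum_mul]
  refine Finset.sum_congr rfl fun i _ => ?_
  rw [Finset.mul_sum, Finset.sum_eq_single i]
  · rw [smul_mul_assoc, mul_smul_comm, vmv_mul_vmv, orth i i, if_pos rfl, one_smul, smul_smul]
  · intro j _ hj
    rw [smul_mul_assoc, mul_smul_comm, vmv_mul_vmv, orth i j, if_neg (Ne.symm hj), zero_smul,
      smul_zero, smul_zero]
  · intro h; exact absurd (Finset.mem_univ i) h

lemma trace_dec (c : Fin 3 → ℝ) (u : Fin 3 → Fin 3 → ℝ)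
    (orth : ∀ i j, u i ⬝ᵥ u j = if i = j then 1 else 0) :
    (∑ i, c i • vecMulVec (u i) (u i)).trace = ∑ i, c i := by
  rw [trace_sum]
  refine Finset.sum_congr rfl fun i _ => ?_
  rw [trace_smul, trace_vmv, orth i i, if_pos rfl, smul_eq_mul, mul_one]

lemma fbulk_uniaxial (a2 b2 c2 s : ℝ) (n : Fin 3 → ℝ) (hn : ∑ i, (n i)^2 = 1) :
    fbulk a2 b2 c2 (s • (vecMulVec n n - (1/3:ℝ) • 1)) = -a2*s^2/3 - 2*b2*s^3/27 + c2*s^4/9 := by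
  have hnn : n ⬝ᵥ n = 1 := by
    rw [dotProduct, ← hn]; exact Finset.sum_congr rfl fun i _ => (pow_two (n i)).symm
  set P := vecMulVec n n with hPdef
  have hPP : P * P = P := by rw [hPdef, vmv_mul_vmv, hnn, one_smul]
  have htrP : P.trace = 1 := by rw [hPdef, trace_vmv, hnn]
  have htr1 : (1 : Mat3).trace = 3 := by simp [trace_one]
  set B := P - (1/3 : ℝ) • 1 with hBdef
  have hB2 : B * B = (1/3 : ℝ) • P + (1/9 : ℝ) • 1 := by
    simp only [hBdef, sub_mul, mul_sub, smul_mul_assoc, mul_smul_comm, one_mul, mul_one,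
      smul_smul, hPP]
    module
  have hB3 : B * B * B = (1/3 : ℝ) • P - (1/27 : ℝ) • 1 := by
    rw [hB2]
    simp only [hBdef, add_mul, sub_mul, mul_sub, smul_mul_assoc, mul_smul_comm, one_mul,
      mul_one, smul_smul, hPP]
    module
  have htrB2 : (B * B).trace = 2/3 := by
    rw [hB2, trace_add, trace_smul, trace_smul, htrP, htr1]
    norm_num
  have htrB3 : (B * B * B).trace = 2/9 := by
    rw [hB3, trace_sub, trace_smul, trace_smul, htrP, htr1]
    norm_num
  have hQ2 : (s • B) * (s • B) = (s*s) • (B*B) := by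
    rw [smul_mul_assoc, mul_smul_comm, smul_smul]
  have hQ3 : (s • B) * (s • B) * (s • B) = (s*s*s) • (B*B*B) := by
    rw [hQ2, smul_mul_assoc, mul_smul_comm, smul_smul]
  rw [fbulk, hQ3, hQ2, trace_smul, trace_smul, htrB2, htrB3, smul_eq_mul, smul_eq_mul]
  ring

theorem stmt0 (a2 b2 c2 : ℝ) (ha : 0 < a2) (hb : 0 < b2) (hc : 0 < c2)
    (Q : Mat3) (hQ : isS0 Q) (n : Fin 3 → ℝ) (hn : ∑ i, (n i)^2 = 1) :
    fbulk a2 b2 c2 (splus a2 b2 c2 • (vecMulVec n n - (1/3 : ℝ) • (1 : Mat3))) ≤ fbulk a2 b2 c2 Q ∧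
    (fbulk a2 b2 c2 Q = fbulk a2 b2 c2 (splus a2 b2 c2 • (vecMulVec n n - (1/3 : ℝ) • (1 : Mat3))) ↔
      ∃ m : Fin 3 → ℝ, (∑ i, (m i)^2 = 1) ∧
        Q = splus a2 b2 c2 • (vecMulVec m m - (1/3 : ℝ) • (1 : Mat3))) := by
  obtain ⟨htpos, ht⟩ := splus_facts a2 b2 c2 ha hb hc
  set t := splus a2 b2 c2 with htdef
  obtain ⟨l, u, orth, hdec, hone⟩ := spectral3 Q hQ.1
  have hmul2 : Q * Q = ∑ i, (l i * l i) • vecMulVec (u i) (u i) := by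
    rw [hdec]; exact dec_mul l l u orth
  have hmul3 : Q * Q * Q = ∑ i, (l i * l i * l i) • vecMulVec (u i) (u i) := by
    rw [hmul2]
    nth_rewrite 1 [hdec]
    exact dec_mul (fun i => l i * l i) l u orth
  have hsum0 : l 0 + l 1 + l 2 = 0 := by
    have h := trace_dec l u orth
    rw [← hdec, hQ.2, Fin.sum_univ_three] at h
    linarith
  have h2tr : (Q*Q).trace = (l 0)^2 + (l 1)^2 + (l 2)^2 := by
    rw [hmul2, trace_dec _ u orth, Fin.sum_univ_three]; ring
  have h3tr : (Q*Q*Q).trace = (l 0)^3 + (l 1)^3 + (l 2)^3 := by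
    rw [hmul3, trace_dec _ u orth, Fin.sum_univ_three]; ring
  have hfQ : fbulk a2 b2 c2 Q = -(a2/2)*((l 0)^2+(l 1)^2+(l 2)^2)
      - (b2/3)*((l 0)^3+(l 1)^3+(l 2)^3) + (c2/4)*((l 0)^2+(l 1)^2+(l 2)^2)^2 := by
    rw [fbulk, h2tr, h3tr]
  have hfU : fbulk a2 b2 c2 (t • (vecMulVec n n - (1/3:ℝ) • 1))
      = -a2*t^2/3 - 2*b2*t^3/27 + c2*t^4/9 := fbulk_uniaxial a2 b2 c2 t n hn
  have hmain := scalar_main a2 b2 c2 t (l 0) (l 1) (l 2) ha hb hc ht htpos hsum0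
  constructor
  · rw [hfU, hfQ]; exact hmain.1
  constructor
  · intro heq
    rw [hfQ, hfU] at heq
    obtain ⟨hp, hq⟩ := hmain.2 heq
    have hx := Lroot t (l 0) (l 1) (l 2) hsum0 hp hq
    have hy := Lroot t (l 1) (l 2) (l 0) (by linarith) (by linarith) (by linarith)
    have hz := Lroot t (l 2) (l 0) (l 1) (by linarith) (by linarith) (by linarith)
    have key : ∀ i₀ : Fin 3, l i₀ = 2*t/3 → (∀ j, j ≠ i₀ → l j = -t/3) →
        ∃ m : Fin 3 → ℝ, (∑ i, (m i)^2 = 1) ∧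
          Q = t • (vecMulVec m m - (1/3 : ℝ) • (1 : Mat3)) := by
      intro i₀ hbig hsmall
      refine ⟨u i₀, ?_, ?_⟩
      · have := orth i₀ i₀
        rw [if_pos rfl, dotProduct] at this
        rw [← this]
        exact Finset.sum_congr rfl fun i _ => pow_two (u i₀ i)
      · rw [hdec, hone]
        have h3 : i₀ = 0 ∨ i₀ = 1 ∨ i₀ = 2 := by omega
        rcases h3 with rfl | rfl | rfl
        · rw [Fin.sum_univ_three, Fin.sum_univ_three,
            hbig, hsmall 1 (by decide), hsmall 2 (by decide)]
          module
        · rw [Fin.sum_univ_three, Fin.sum_univ_three,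
            hbig, hsmall 0 (by decide), hsmall 2 (by decide)]
          module
        · rw [Fin.sum_univ_three, Fin.sum_univ_three,
            hbig, hsmall 0 (by decide), hsmall 1 (by decide)]
          module
    rcases hx with hx | hx <;> rcases hy with hy | hy <;> rcases hz with hz | hz
    · exfalso; rw [hx, hy, hz] at hsum0; linarith
    · exfalso; rw [hx, hy, hz] at hsum0; linarith
    · exfalso; rw [hx, hy, hz] at hsum0; linarith
    · exact key 0 hx (by
        intro j hj
        fin_cases j
        · exact absurd rfl hj
        · exact hy
        · exact hz)
    · exfalso; rw [hx, hy, hz] at hsum0; linarith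
    · exact key 1 hy (by
        intro j hj
        fin_cases j
        · exact hx
        · exact absurd rfl hj
        · exact hz)
    · exact key 2 hz (by
        intro j hj
        fin_cases j
        · exact hx
        · exact hy
        · exact absurd rfl hj)
    · exfalso; rw [hx, hy, hz] at hsum0; linarith
  · rintro ⟨m, hm, rfl⟩
    rw [hfU, fbulk_uniaxial a2 b2 c2 t m hm]
end
end

section
/- Let 0 < R < ∞ and let w : (0,R) → ℝ be continuously differentiable with ∫₀^R w'(r)² r dr < ∞ and ∫₀^R w(r)²/r dr < ∞. Then lim_{r→0⁺} w(r) = 0. -/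
open Real Matrix
open scoped ENNReal

noncomputable section

def e1 : Fin 3 → ℝ := ![1, 0, 0]
def e2 : Fin 3 → ℝ := ![0, 1, 0]
def e3 : Fin 3 → ℝ := ![0, 0, 1]

/-- `n(φ) = (cos(kφ/2), sin(kφ/2), 0)`. -/
def nvec (k : ℤ) (φ : ℝ) : Fin 3 → ℝ := ![Real.cos ((k : ℝ) * φ / 2), Real.sin ((k : ℝ) * φ / 2), 0]

/-- `m(φ) = (−sin(kφ/2), cos(kφ/2), 0)`. -/
def mvec (k : ℤ) (φ : ℝ) : Fin 3 → ℝ := ![-Real.sin ((k : ℝ) * φ / 2), Real.cos ((k : ℝ) * φ / 2), 0]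

/-- `I₂ = I₃ − e₃ ⊗ e₃`. -/
def I2 : Mat3 := 1 - vecMulVec e3 e3

def E0 : Mat3 := Real.sqrt (3/2) • (vecMulVec e3 e3 - (1/3 : ℝ) • (1 : Mat3))
def E1 (k : ℤ) (φ : ℝ) : Mat3 :=
  Real.sqrt 2 • (vecMulVec (nvec k φ) (nvec k φ) - (1/2 : ℝ) • I2)
def E2mat (k : ℤ) (φ : ℝ) : Mat3 :=
  (Real.sqrt 2)⁻¹ • (vecMulVec (nvec k φ) (mvec k φ) + vecMulVec (mvec k φ) (nvec k φ))
def E3mat : Mat3 := (Real.sqrt 2)⁻¹ • (vecMulVec e1 e3 + vecMulVec e3 e1)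
def E4mat : Mat3 := (Real.sqrt 2)⁻¹ • (vecMulVec e2 e3 + vecMulVec e3 e2)

/-- The rotation `R_k(ψ)` of winding `k/2` about the vertical axis. -/
def Rk (k : ℤ) (ψ : ℝ) : Mat3 :=
  !![Real.cos ((k : ℝ) * ψ / 2), -Real.sin ((k : ℝ) * ψ / 2), 0;
     Real.sin ((k : ℝ) * ψ / 2),  Real.cos ((k : ℝ) * ψ / 2), 0;
     0, 0, 1]

/-- Laplacian of a scalar function on `ℝ²`, as the sum of the two repeated partial
derivatives along the coordinate axes. -/
def lap (f : ℝ × ℝ → ℝ) (p : ℝ × ℝ) : ℝ :=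
  deriv (fun t => deriv (fun s => f (s, p.2)) t) p.1 +
  deriv (fun t => deriv (fun s => f (p.1, s)) t) p.2

/-- Componentwise Laplacian of a matrix-valued map on `ℝ²`. -/
def matLap (Q : ℝ × ℝ → Mat3) (p : ℝ × ℝ) : Mat3 :=
  Matrix.of fun i j => lap (fun x => Q x i j) p

/-- Squared norm of the gradient of a scalar function on `ℝ²`. -/
def gradNormSq (f : ℝ × ℝ → ℝ) (p : ℝ × ℝ) : ℝ :=
  (fderiv ℝ f p (1, 0))^2 + (fderiv ℝ f p (0, 1))^2

/-- `|∇Q|²`: sum over all matrix entries of the squared norms of their gradients. -/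
def matGradNormSq (Q : ℝ × ℝ → Mat3) (p : ℝ × ℝ) : ℝ :=
  ∑ i, ∑ j, gradNormSq (fun x => Q x i j) p

/-- Membership in the open disk of radius `R ∈ (0,∞]` centered at the origin. -/
def inBall (R : ℝ≥0∞) (x : ℝ × ℝ) : Prop :=
  ENNReal.ofReal (Real.sqrt (x.1^2 + x.2^2)) < R

/-- The right-hand side of the Euler–Lagrange equation
`ΔQ = −a²Q − b²(Q² − (1/3)|Q|²I₃) + c²|Q|²Q`. -/
def ELrhs (a2 b2 c2 : ℝ) (A : Mat3) : Mat3 :=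
  -a2 • A - b2 • (A * A - ((1/3 : ℝ) * (A * A).trace) • (1 : Mat3)) + (c2 * (A * A).trace) • A

/-- Frobenius squared norm of a 3×3 matrix. -/
def frobSq (A : Mat3) : ℝ := ∑ i, ∑ j, (A i j)^2

/-- For `x = (x₁,x₂) ∈ ℝ²`, `x̃ = (x₁,x₂,0) ∈ ℝ³`. -/
def tilde (x : ℝ × ℝ) : Fin 3 → ℝ := ![x.1, x.2, 0]

/-- The projection `P₂(x₁,x₂,x₃) = (x₁,x₂)`. -/
def P2 (v : Fin 3 → ℝ) : ℝ × ℝ := (v 0, v 1)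

/-- The antisymmetric matrix `S₀ = e₂⊗e₁ − e₁⊗e₂`. -/
def S0mat : Mat3 := vecMulVec e2 e1 - vecMulVec e1 e2

end
/-- a `C¹` function on `(0,R)` with `∫₀^R w'(r)² r dr < ∞` and
`∫₀^R w(r)²/r dr < ∞` tends to `0` as `r → 0⁺`. -/
theorem stmt16 (R : ℝ) (hR : 0 < R) (w : ℝ → ℝ)
    (hw : ContDiffOn ℝ 1 w (Set.Ioo 0 R))
    (h1 : ∫⁻ r in Set.Ioo (0 : ℝ) R, ENNReal.ofReal ((deriv w r)^2 * r) < ⊤)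
    (h2 : ∫⁻ r in Set.Ioo (0 : ℝ) R, ENNReal.ofReal ((w r)^2 / r) < ⊤) :
    Filter.Tendsto w (nhdsWithin 0 (Set.Ioi 0)) (nhds 0) := by
  classical
  have hO : IsOpen (Set.Ioo (0:ℝ) R) := isOpen_Ioo
  set c := R/2 with hcdef
  have hc0 : 0 < c := by positivity
  have hcR : c < R := by rw [hcdef]; linarith
  have hwc : ContinuousOn w (Set.Ioo 0 R) := hw.continuousOn
  have hw'c : ContinuousOn (deriv w) (Set.Ioo 0 R) :=
    hw.continuousOn_deriv_of_isOpen hO le_rfl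
  set G : ℝ → ℝ := fun r => 2 * w r * deriv w r with hGdef
  have hGcont : ContinuousOn G (Set.Ioo 0 R) :=
    (continuousOn_const.mul hwc).mul hw'c
  have hder : ∀ x ∈ Set.Ioo 0 R, HasDerivAt (fun r => w r ^ 2) (G x) x := by
    intro x hx
    have hdw : HasDerivAt w (deriv w x) x :=
      ((hw.differentiableOn one_ne_zero).differentiableAt (hO.mem_nhds hx)).hasDerivAt
    have := hdw.fun_pow 2
    simpa [hGdef] using this
  have hbound : ∀ r ∈ Set.Ioo (0:ℝ) R,
      |G r| ≤ w r ^ 2 / r + (deriv w r) ^ 2 * r := by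
    intro r hr
    have hr0 : 0 < r := hr.1
    have hr0' : r ≠ 0 := ne_of_gt hr0
    have hhr : (w r ^ 2 / r + (deriv w r) ^ 2 * r) * r
        = w r ^ 2 + (deriv w r) ^ 2 * r ^ 2 := by field_simp
    rw [abs_le]
    constructor
    · have key : (-(w r ^ 2 / r + (deriv w r) ^ 2 * r)) * r ≤ G r * r := by
        rw [neg_mul, hhr]
        show -(w r ^ 2 + deriv w r ^ 2 * r ^ 2) ≤ 2 * w r * deriv w r * r
        nlinarith [sq_nonneg (w r + deriv w r * r)]
      linarith [le_of_mul_le_mul_right key hr0]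
    · have key : G r * r ≤ (w r ^ 2 / r + (deriv w r) ^ 2 * r) * r := by
        rw [hhr]
        show 2 * w r * deriv w r * r ≤ w r ^ 2 + deriv w r ^ 2 * r ^ 2
        nlinarith [sq_nonneg (w r - deriv w r * r)]
      exact le_of_mul_le_mul_right key hr0
  have hGint : MeasureTheory.IntegrableOn G (Set.Ioo 0 R) := by
    refine ⟨hGcont.aestronglyMeasurable measurableSet_Ioo, ?_⟩
    rw [MeasureTheory.hasFiniteIntegral_iff_norm]
    calc ∫⁻ r in Set.Ioo (0:ℝ) R, ENNReal.ofReal ‖G r‖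
        ≤ ∫⁻ r in Set.Ioo (0:ℝ) R,
            (ENNReal.ofReal ((w r)^2 / r) + ENNReal.ofReal ((deriv w r)^2 * r)) := by
          refine MeasureTheory.lintegral_mono_ae ?_
          filter_upwards [MeasureTheory.ae_restrict_mem measurableSet_Ioo] with r hr
          rw [Real.norm_eq_abs]
          refine le_trans (ENNReal.ofReal_le_ofReal (hbound r hr)) ?_
          exact ENNReal.ofReal_add_le
      _ = (∫⁻ r in Set.Ioo (0:ℝ) R, ENNReal.ofReal ((w r)^2 / r))
            + ∫⁻ r in Set.Ioo (0:ℝ) R, ENNReal.ofReal ((deriv w r)^2 * r) := by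
          refine MeasureTheory.lintegral_add_left' ?_ _
          have hcont : ContinuousOn (fun r => (w r)^2 / r) (Set.Ioo 0 R) :=
            (hwc.pow 2).div continuousOn_id (fun x hx => ne_of_gt hx.1)
          exact (hcont.aemeasurable measurableSet_Ioo).ennreal_ofReal
      _ < ⊤ := ENNReal.add_lt_top.mpr ⟨h2, h1⟩
  have hIocsub : Set.Ioc (0:ℝ) c ⊆ Set.Ioo 0 R := fun x hx => ⟨hx.1, lt_of_le_of_lt hx.2 hcR⟩
  have hGc : MeasureTheory.IntegrableOn G (Set.Ioc 0 c) := hGint.mono_set hIocsub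
  have hGicc : MeasureTheory.IntegrableOn G (Set.Icc 0 c) :=
    Iff.mpr integrableOn_Icc_iff_integrableOn_Ioc hGc
  have hprim : ContinuousOn (fun x => ∫ t in Set.Ioc 0 x, G t) (Set.Icc 0 c) :=
    intervalIntegral.continuousOn_primitive hGicc
  have hT0 : Filter.Tendsto (fun x => ∫ t in Set.Ioc 0 x, G t)
      (nhdsWithin 0 (Set.Ioi 0)) (nhds 0) := by
    have h0 : (∫ t in Set.Ioc (0:ℝ) 0, G t) = 0 := by simp
    have := (hprim 0 ⟨le_rfl, hc0.le⟩)
    rw [ContinuousWithinAt, h0] at this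
    rw [← nhdsWithin_Ioo_eq_nhdsGT hc0]
    exact this.mono_left (nhdsWithin_mono 0 Set.Ioo_subset_Icc_self)
  have hFTC : ∀ r ∈ Set.Ioo (0:ℝ) c,
      w r ^ 2 = (w c ^ 2 - ∫ t in Set.Ioc (0:ℝ) c, G t) + ∫ t in Set.Ioc (0:ℝ) r, G t := by
    intro r hr
    have hrc : r ≤ c := hr.2.le
    have hint : IntervalIntegrable G MeasureTheory.volume r c := by
      rw [intervalIntegrable_iff_integrableOn_Ioc_of_le hrc]
      exact hGc.mono_set (Set.Ioc_subset_Ioc_left hr.1.le)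
    have hint0r : IntervalIntegrable G MeasureTheory.volume 0 r := by
      rw [intervalIntegrable_iff_integrableOn_Ioc_of_le hr.1.le]
      exact hGc.mono_set (Set.Ioc_subset_Ioc_right hrc)
    have hftc := intervalIntegral.integral_eq_sub_of_hasDerivAt
      (f := fun s => w s ^ 2) (f' := G)
      (fun x hx => by
        rw [Set.uIcc_of_le hrc] at hx
        exact hder x ⟨lt_of_lt_of_le hr.1 hx.1, lt_of_le_of_lt hx.2 hcR⟩) hint
    have hsplit : (∫ t in (0:ℝ)..r, G t) + ∫ t in r..c, G t = ∫ t in (0:ℝ)..c, G t :=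
      intervalIntegral.integral_add_adjacent_intervals hint0r hint
    have hftc' : (∫ t in r..c, G t) = w c ^ 2 - w r ^ 2 := by simpa using hftc
    rw [intervalIntegral.integral_of_le hr.1.le, intervalIntegral.integral_of_le hc0.le,
      hftc'] at hsplit
    linarith
  set L : ℝ := w c ^ 2 - ∫ t in Set.Ioc (0:ℝ) c, G t with hLdef
  have hTL : Filter.Tendsto (fun r => w r ^ 2) (nhdsWithin 0 (Set.Ioi 0)) (nhds L) := by
    have h' : Filter.Tendsto (fun r => L + ∫ t in Set.Ioc (0:ℝ) r, G t)
        (nhdsWithin 0 (Set.Ioi 0)) (nhds (L + 0)) := tendsto_const_nhds.add hT0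
    rw [add_zero] at h'
    have hmem : Set.Ioo (0:ℝ) c ∈ nhdsWithin (0:ℝ) (Set.Ioi 0) :=
      Ioo_mem_nhdsGT_of_mem ⟨le_rfl, hc0⟩
    refine h'.congr' ?_
    filter_upwards [hmem] with r hr
    exact (hFTC r hr).symm
  have hge : 0 ≤ L :=
    ge_of_tendsto hTL (Filter.Eventually.of_forall fun r => sq_nonneg _)
  have hL0 : L = 0 := by
    by_contra hne
    have hLpos : 0 < L := lt_of_le_of_ne hge (Ne.symm hne)
    have hev : ∀ᶠ r in nhdsWithin (0:ℝ) (Set.Ioi 0), L/2 ≤ w r ^ 2 :=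
      hTL.eventually (eventually_ge_nhds (by linarith))
    obtain ⟨u, hu, husub⟩ := mem_nhdsGT_iff_exists_Ioo_subset.mp hev
    set ε := min u R with hεdef
    have hεpos : 0 < ε := lt_min hu hR
    have hεR : ε ≤ R := min_le_right _ _
    have hεu : ε ≤ u := min_le_left _ _
    have hnotint : ¬ MeasureTheory.IntegrableOn (fun r : ℝ => r⁻¹) (Set.Ioo 0 ε) := by
      intro hint
      have : MeasureTheory.IntegrableOn (fun r : ℝ => r ^ (-1:ℝ)) (Set.Ioo 0 ε) := by
        refine hint.congr_fun (fun x hx => ?_) measurableSet_Ioo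
        rw [Real.rpow_neg_one]
      rw [intervalIntegral.integrableOn_Ioo_rpow_iff hεpos] at this
      linarith
    have htop : ∫⁻ r in Set.Ioo (0:ℝ) ε, ENNReal.ofReal (L/2 / r) = ⊤ := by
      by_contra hlt
      have hfin : ∫⁻ r in Set.Ioo (0:ℝ) ε, ENNReal.ofReal (L/2 / r) < ⊤ :=
        lt_top_iff_ne_top.mpr hlt
      have hnn : 0 ≤ᵐ[MeasureTheory.volume.restrict (Set.Ioo (0:ℝ) ε)]
          (fun r => L/2 / r) := by
        filter_upwards [MeasureTheory.ae_restrict_mem measurableSet_Ioo] with r hr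
        exact div_nonneg (by linarith) hr.1.le
      have hint : MeasureTheory.IntegrableOn (fun r => L/2 / r) (Set.Ioo 0 ε) :=
        ⟨(measurable_const.div measurable_id).aestronglyMeasurable,
          (MeasureTheory.hasFiniteIntegral_iff_ofReal hnn).mpr hfin⟩
      have hint2 : MeasureTheory.IntegrableOn (fun r : ℝ => r⁻¹) (Set.Ioo 0 ε) := by
        have h3 : MeasureTheory.IntegrableOn (fun r : ℝ => 2/L * (L/2 / r)) (Set.Ioo 0 ε) :=
          hint.const_mul (2/L)
        refine h3.congr_fun (fun x hx => ?_) measurableSet_Ioo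
        field_simp
      exact hnotint hint2
    have hle : ∫⁻ r in Set.Ioo (0:ℝ) ε, ENNReal.ofReal (L/2 / r)
        ≤ ∫⁻ r in Set.Ioo (0:ℝ) R, ENNReal.ofReal ((w r)^2 / r) := by
      refine le_trans (MeasureTheory.lintegral_mono_ae ?_)
        (MeasureTheory.lintegral_mono_set (Set.Ioo_subset_Ioo_right hεR))
      filter_upwards [MeasureTheory.ae_restrict_mem measurableSet_Ioo] with r hr
      refine ENNReal.ofReal_le_ofReal ?_
      have hrL : L/2 ≤ w r ^ 2 := husub ⟨hr.1, lt_of_lt_of_le hr.2 hεu⟩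
      exact (div_le_div_iff_of_pos_right hr.1).mpr hrL
    rw [htop] at hle
    exact absurd (lt_of_le_of_lt hle h2) (lt_irrefl ⊤)
  rw [hL0] at hTL
  have habs : Filter.Tendsto (fun r => |w r|) (nhdsWithin 0 (Set.Ioi 0)) (nhds 0) := by
    have h' := (Real.continuous_sqrt.tendsto 0).comp hTL
    rw [Real.sqrt_zero] at h'
    exact h'.congr fun r => Real.sqrt_sq_eq_abs _
  exact (tendsto_zero_iff_abs_tendsto_zero w).mpr habs
end
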